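/- arXiv:0908.0587 — 5 statements merged into one kernel-verified Lean document; each statement's English description precedes it below -/
import Mathlib

section
/- Let f : ℕ → ℝ be a non-negative function and M > 0 a constant such that |f(t+1) − f(t)| ≤ M for all t. If limsup_{t→∞} (1/t) ∑_{i=0}^{t} f(i) ≤ C for some finite constant C, then lim_{t→∞} f(t)/t = 0. -/
private lemma decr_aux (f : ℕ → ℝ) (M : ℝ) (hbd : ∀ t, |f (t + 1) - f t| ≤ M) :
    ∀ k a, f (a + k) - M * k ≤ f a := by
  intro k
  induction k with
  | zero => intro a; simp
  | succ k ih =>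
    intro a
    have h1 := ih (a + 1)
    have h2 := (abs_le.mp (hbd a)).2
    have heq : a + (k + 1) = a + 1 + k := by omega
    rw [heq]
    push_cast
    linarith

/-- Bounded-convergence lemma: a non-negative sequence with uniformly bounded increments
whose Cesàro averages have limit superior at most a finite constant `C` satisfies
`f t / t → 0`. -/
theorem bounded_increment_cesaro (f : ℕ → ℝ) (hf : ∀ t, 0 ≤ f t)
    (M : ℝ) (hM : 0 < M) (hbd : ∀ t, |f (t + 1) - f t| ≤ M)
    (C : ℝ)
    (hC : Filter.limsup
        (fun t : ℕ => (((1 / (t : ℝ)) * ∑ i ∈ Finset.range (t + 1), f i : ℝ) : EReal))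
        Filter.atTop ≤ (C : EReal)) :
    Filter.Tendsto (fun t : ℕ => f t / (t : ℝ)) Filter.atTop (nhds 0) := by
  -- Step 1: eventually the Cesàro average is < C + 1
  have hlt : ∀ᶠ t : ℕ in Filter.atTop,
      (1 / (t : ℝ)) * ∑ i ∈ Finset.range (t + 1), f i < C + 1 := by
    have h := Filter.eventually_lt_of_limsup_lt
      (lt_of_le_of_lt hC (by exact_mod_cast (by linarith : C < C + 1) :
        (C : EReal) < ((C + 1 : ℝ) : EReal)))
    filter_upwards [h] with t ht
    exact_mod_cast ht
  obtain ⟨T, hT⟩ := Filter.eventually_atTop.mp hlt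
  rw [Metric.tendsto_atTop]
  intro ε hε
  set c : ℝ := min (ε / 2) (ε ^ 2 / (4 * M)) with hc_def
  have hc : 0 < c := lt_min (by linarith) (by positivity)
  obtain ⟨K, hK⟩ := exists_nat_ge ((C + 1) / c + 1)
  refine ⟨max (max T K) 1, fun n hn => ?_⟩
  have hnT : T ≤ n := le_trans (le_trans (le_max_left _ _) (le_max_left _ _)) hn
  have hnK : K ≤ n := le_trans (le_trans (le_max_right _ _) (le_max_left _ _)) hn
  have hn1 : 1 ≤ n := le_trans (le_max_right _ _) hn
  have hnpos : (0 : ℝ) < n := by exact_mod_cast hn1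
  rw [Real.dist_eq, sub_zero, abs_of_nonneg (div_nonneg (hf n) (Nat.cast_nonneg n))]
  by_contra h
  push_neg at h
  have hfn : ε * n ≤ f n := by
    rw [le_div_iff₀ hnpos] at h; linarith
  set m : ℕ := min n ⌊ε * n / (2 * M)⌋₊ with hm_def
  have hm_n : m ≤ n := min_le_left _ _
  have hm_fl : (m : ℝ) ≤ ε * n / (2 * M) := by
    calc (m : ℝ) ≤ (⌊ε * n / (2 * M)⌋₊ : ℝ) := by exact_mod_cast min_le_right _ _
      _ ≤ ε * n / (2 * M) := Nat.floor_le (by positivity)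
  have hMm : M * m ≤ ε * n / 2 := by
    have h' := mul_le_mul_of_nonneg_left hm_fl hM.le
    have heq : M * (ε * n / (2 * M)) = ε * n / 2 := by field_simp
    linarith
  -- each term in the block is at least ε n / 2
  have hblock : ∀ i ∈ Finset.Icc (n - m) n, ε * n / 2 ≤ f i := by
    intro i hi
    rw [Finset.mem_Icc] at hi
    have hin : i ≤ n := hi.2
    have hni : n - i ≤ m := by omega
    have hd := decr_aux f M hbd (n - i) i
    rw [show i + (n - i) = n by omega] at hd
    have hcast : ((n - i : ℕ) : ℝ) ≤ (m : ℝ) := by exact_mod_cast hni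
    have : f n - M * m ≤ f i := by
      have := mul_le_mul_of_nonneg_left hcast hM.le
      linarith
    linarith
  -- sum lower bound
  have hsum : ((m : ℝ) + 1) * (ε * n / 2) ≤ ∑ i ∈ Finset.range (n + 1), f i := by
    have hsub : Finset.Icc (n - m) n ⊆ Finset.range (n + 1) := by
      intro i hi
      rw [Finset.mem_Icc] at hi
      rw [Finset.mem_range]; omega
    have h1 : ∑ i ∈ Finset.Icc (n - m) n, f i ≤ ∑ i ∈ Finset.range (n + 1), f i :=
      Finset.sum_le_sum_of_subset_of_nonneg hsub (fun i _ _ => hf i)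
    have hcard : (Finset.Icc (n - m) n).card = m + 1 := by
      rw [Nat.card_Icc]; omega
    have h2 := Finset.card_nsmul_le_sum (Finset.Icc (n - m) n) f (ε * n / 2) hblock
    rw [hcard, nsmul_eq_mul] at h2
    push_cast at h2
    linarith
  -- average lower bound
  have havg : ((m : ℝ) + 1) * ε / 2 ≤ (1 / (n : ℝ)) * ∑ i ∈ Finset.range (n + 1), f i := by
    have := mul_le_mul_of_nonneg_left hsum (by positivity : (0:ℝ) ≤ 1 / (n:ℝ))
    calc ((m : ℝ) + 1) * ε / 2 = (1 / (n : ℝ)) * (((m : ℝ) + 1) * (ε * n / 2)) := by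
          field_simp
      _ ≤ _ := this
  -- (m+1) ε / 2 ≥ c n
  have hcn : c * n ≤ ((m : ℝ) + 1) * ε / 2 := by
    rcases le_total n ⌊ε * n / (2 * M)⌋₊ with hcase | hcase
    · have hmn : m = n := min_eq_left hcase
      have : c ≤ ε / 2 := min_le_left _ _
      calc c * n ≤ (ε / 2) * n := by nlinarith
        _ ≤ ((m : ℝ) + 1) * ε / 2 := by rw [hmn]; nlinarith
    · have hmfl : m = ⌊ε * n / (2 * M)⌋₊ := min_eq_right hcase
      have hflgt : ε * n / (2 * M) < (m : ℝ) + 1 := by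
        rw [hmfl]
        push_cast
        exact Nat.lt_floor_add_one _
      have : c ≤ ε ^ 2 / (4 * M) := min_le_right _ _
      have h1 : (ε * n / (2 * M)) * ε / 2 ≤ ((m : ℝ) + 1) * ε / 2 := by nlinarith
      have h2 : (ε * n / (2 * M)) * ε / 2 = (ε ^ 2 / (4 * M)) * n := by
        field_simp; ring
      calc c * n ≤ (ε ^ 2 / (4 * M)) * n := by nlinarith
        _ ≤ _ := by rw [← h2]; exact h1
  -- c n ≥ C + 1 + c > C + 1
  have hnK' : ((C + 1) / c + 1) ≤ (n : ℝ) := le_trans hK (by exact_mod_cast hnK)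
  have hbig : C + 1 + c ≤ c * n := by
    have := mul_le_mul_of_nonneg_left hnK' hc.le
    have hdc : c * ((C + 1) / c + 1) = C + 1 + c := by field_simp
    linarith [hdc ▸ this]
  have hAn := hT n hnT
  linarith
end

section
/- Let p, q ∈ [0,1] and r, r' ≥ 0 be real numbers and n a positive integer. If r·p ≥ r'·q, then r·∑_{t=1}^{n} p(1−p)^{t−1}(1−q)^{n−t} ≥ r'·∑_{t=1}^{n} q(1−q)^{t−1}(1−p)^{n−t}. -/
/-- Joint debt-channel comparison: if `r * p ≥ r' * q` then prioritizing the client with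
reliability `p` gives at least as large a weighted exclusive-delivery probability. -/
theorem exclusive_delivery_comparison (p q : ℝ) (hp : p ∈ Set.Icc (0 : ℝ) 1)
    (hq : q ∈ Set.Icc (0 : ℝ) 1) (r r' : ℝ) (hr : 0 ≤ r) (hr' : 0 ≤ r')
    (n : ℕ) (hn : 0 < n) (h : r * p ≥ r' * q) :
    r * ∑ t ∈ Finset.Icc 1 n, p * (1 - p) ^ (t - 1) * (1 - q) ^ (n - t) ≥
      r' * ∑ t ∈ Finset.Icc 1 n, q * (1 - q) ^ (t - 1) * (1 - p) ^ (n - t) := by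
  obtain ⟨hp0, hp1⟩ := hp
  obtain ⟨hq0, hq1⟩ := hq
  have hrefl : ∑ t ∈ Finset.Icc 1 n, q * (1 - q) ^ (t - 1) * (1 - p) ^ (n - t)
      = ∑ t ∈ Finset.Icc 1 n, q * (1 - q) ^ (n - t) * (1 - p) ^ (t - 1) := by
    refine Finset.sum_nbij' (fun t => n + 1 - t) (fun t => n + 1 - t) ?_ ?_ ?_ ?_ ?_
    · intro t ht
      simp only [Finset.mem_Icc] at *
      omega
    · intro t ht
      simp only [Finset.mem_Icc] at *
      omega
    · intro t ht
      simp only [Finset.mem_Icc] at ht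
      omega
    · intro t ht
      simp only [Finset.mem_Icc] at ht
      omega
    · intro t ht
      simp only [Finset.mem_Icc] at ht
      have h1 : n + 1 - t - 1 = n - t := by omega
      have h2 : n - (n + 1 - t) = t - 1 := by omega
      rw [h1, h2]
  rw [hrefl, Finset.mul_sum, Finset.mul_sum]
  apply Finset.sum_le_sum
  intro t ht
  have h1p : 0 ≤ 1 - p := by linarith
  have h1q : 0 ≤ 1 - q := by linarith
  have hX : 0 ≤ (1 - q) ^ (n - t) * (1 - p) ^ (t - 1) := by positivity
  calc r' * (q * (1 - q) ^ (n - t) * (1 - p) ^ (t - 1))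
      = (r' * q) * ((1 - q) ^ (n - t) * (1 - p) ^ (t - 1)) := by ring
    _ ≤ (r * p) * ((1 - q) ^ (n - t) * (1 - p) ^ (t - 1)) := by
        exact mul_le_mul_of_nonneg_right h hX
    _ = r * (p * (1 - p) ^ (t - 1) * (1 - q) ^ (n - t)) := by ring
end

section
/- Let p, q ∈ ℝ and n a positive integer. Then ∑_{t=1}^{n} p(1−p)^{t−1}(1 − (1−q)^{n−t}) = ∑_{t=1}^{n} q(1−q)^{t−1}(1 − (1−p)^{n−t}). -/
lemma reindex (x y : ℝ) (n : ℕ) :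
    ∑ t ∈ Finset.Icc 1 n, (1 - x) * x ^ (t - 1) * (1 - y ^ (n - t)) =
      ∑ i ∈ Finset.range n, (1 - x) * x ^ i * (1 - y ^ (n - 1 - i)) := by
  rw [← Finset.Ico_add_one_right_eq_Icc, Finset.sum_Ico_eq_sum_range]
  apply Finset.sum_congr rfl
  intro i _
  rw [show 1 + i - 1 = i by omega, show n - (1 + i) = n - 1 - i by omega]

/-- The probability that both packets are delivered is the same under either priority
ordering: an algebraic identity valid for all real `p`, `q`. -/
theorem both_delivered_symmetric (p q : ℝ) (n : ℕ) (hn : 0 < n) :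
    ∑ t ∈ Finset.Icc 1 n, p * (1 - p) ^ (t - 1) * (1 - (1 - q) ^ (n - t)) =
      ∑ t ∈ Finset.Icc 1 n, q * (1 - q) ^ (t - 1) * (1 - (1 - p) ^ (n - t)) := by
  set a := 1 - p with ha
  set b := 1 - q with hb
  have hp : p = 1 - a := by rw [ha]; ring
  have hq : q = 1 - b := by rw [hb]; ring
  rw [hp, hq, reindex, reindex]
  set G : ℝ := ∑ i ∈ Finset.range n, a ^ i * b ^ (n - 1 - i) with hG
  have hGsym : (∑ i ∈ Finset.range n, b ^ i * a ^ (n - 1 - i)) = G := by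
    rw [hG, ← Finset.sum_range_reflect]
    apply Finset.sum_congr rfl
    intro i hi
    simp only [Finset.mem_range] at hi
    rw [mul_comm]
    congr 2 <;> omega
  have hgeom : G * (a - b) = a ^ n - b ^ n := geom_sum₂_mul a b n
  have hSa : (∑ i ∈ Finset.range n, a ^ i) * (a - 1) = a ^ n - 1 := geom_sum_mul a n
  have hSb : (∑ i ∈ Finset.range n, b ^ i) * (b - 1) = b ^ n - 1 := geom_sum_mul b n
  have hL : ∑ i ∈ Finset.range n, (1 - a) * a ^ i * (1 - b ^ (n - 1 - i)) =
      (1 - a) * (∑ i ∈ Finset.range n, a ^ i) - (1 - a) * G := by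
    rw [Finset.mul_sum, Finset.mul_sum, ← Finset.sum_sub_distrib]
    apply Finset.sum_congr rfl
    intro i _; ring
  have hR : ∑ i ∈ Finset.range n, (1 - b) * b ^ i * (1 - a ^ (n - 1 - i)) =
      (1 - b) * (∑ i ∈ Finset.range n, b ^ i) - (1 - b) * G := by
    rw [← hGsym, Finset.mul_sum, Finset.mul_sum, ← Finset.sum_sub_distrib]
    apply Finset.sum_congr rfl
    intro i _; ring
  rw [hL, hR]
  nlinarith [hSa, hSb, hgeom]
end

section
/- Let N and T be positive integers; for n = 1,…,N let r_n ≥ 0 be a real value, s_n a positive integer service time, and τ_n ≤ T a positive integer deadline, with the indexing sorted so that τ_1 ≤ τ_2 ≤ ⋯ ≤ τ_N. Call a subset S ⊆ {1,…,n} feasible within time t if, executing the jobs of S consecutively in increasing index order, each completes by its own deadline and by time t; that is, for every m ∈ S, ∑_{m' ∈ S, m' ≤ m} s_{m'} ≤ min(τ_m, t). Define M[n,t] for 0 ≤ n ≤ N, 0 ≤ t ≤ T by M[0,t] = 0, M[n,0] = 0, M[n,t] = M[n,t−1] if t > τ_n, and otherwise M[n,t] = max{ M[n−1,t], r_n + M[n−1,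 t−s_n] } (with the second option allowed only when t ≥ s_n). Then M[N,T] equals the maximum of ∑_{n∈S} r_n over all subsets S ⊆ {1,…,N} feasible within time T. -/
/-- The dynamic program of the Modified Knapsack Policy:
`knapsackDP r s τ n t` is `M[n,t]`, with `M[0,t] = 0`, `M[n,0] = 0`,
`M[n,t] = M[n,t-1]` if `t > τ n`, and otherwise
`M[n,t] = max (M[n-1,t]) (r n + M[n-1, t - s n])`, the second option being
allowed only when `t ≥ s n`. -/
noncomputable def knapsackDP (r : ℕ → ℝ) (s τ : ℕ → ℕ) : ℕ → ℕ → ℝ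
  | 0, _ => 0
  | _ + 1, 0 => 0
  | n + 1, t + 1 =>
    if τ (n + 1) < t + 1 then knapsackDP r s τ (n + 1) t
    else if s (n + 1) ≤ t + 1 then
      max (knapsackDP r s τ n (t + 1))
        (r (n + 1) + knapsackDP r s τ n (t + 1 - s (n + 1)))
    else knapsackDP r s τ n (t + 1)
  termination_by n t => (n, t)

/-- The set of achievable total rewards for subsets of `{1,…,n}` feasible within time `t`. -/
def feasSet (r : ℕ → ℝ) (s τ : ℕ → ℕ) (n t : ℕ) : Set ℝ :=
  {x : ℝ | ∃ S : Finset ℕ, S ⊆ Finset.Icc 1 n ∧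
    (∀ m ∈ S, ∑ m' ∈ S.filter (fun m' => m' ≤ m), s m' ≤ min (τ m) t) ∧
    x = ∑ n ∈ S, r n}

lemma feas_total_le (s τ : ℕ → ℕ) (t : ℕ) (S : Finset ℕ)
    (h : ∀ m ∈ S, ∑ m' ∈ S.filter (fun m' => m' ≤ m), s m' ≤ min (τ m) t) :
    ∑ m ∈ S, s m ≤ t := by
  rcases S.eq_empty_or_nonempty with rfl | hne
  · simp
  · have hmax := S.max'_mem hne
    have h1 := h _ hmax
    have heq : S.filter (fun m' => m' ≤ S.max' hne) = S := by
      apply Finset.filter_true_of_mem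
      intro x hx
      exact S.le_max' x hx
    rw [heq] at h1
    exact h1.trans (min_le_right _ _)

lemma zero_mem_feasSet (r : ℕ → ℝ) (s τ : ℕ → ℕ) (n t : ℕ) :
    (0 : ℝ) ∈ feasSet r s τ n t :=
  ⟨∅, by simp, by simp, by simp⟩

lemma knapsackDP_isGreatest (N : ℕ) (r : ℕ → ℝ) (s τ : ℕ → ℕ)
    (hs : ∀ n ∈ Finset.Icc 1 N, 0 < s n)
    (hsorted : ∀ m n, 1 ≤ m → m ≤ n → n ≤ N → τ m ≤ τ n) :
    ∀ n, n ≤ N → ∀ t, IsGreatest (feasSet r s τ n t) (knapsackDP r s τ n t) := by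
  intro n
  induction n with
  | zero =>
    intro _ t
    constructor
    · simpa [knapsackDP] using zero_mem_feasSet r s τ 0 t
    · rintro x ⟨S, hS, -, rfl⟩
      have hSe : S = ∅ := by
        rwa [Finset.Icc_eq_empty (by norm_num), Finset.subset_empty] at hS
      simp [hSe, knapsackDP]
  | succ n ih =>
    intro hn
    have hn' : n ≤ N := (Nat.le_succ n).trans hn
    intro t
    induction t with
    | zero =>
      constructor
      · simpa [knapsackDP] using zero_mem_feasSet r s τ (n + 1) 0
      · rintro x ⟨S, hS, hfeas, rfl⟩
        have hSe : S = ∅ := by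
          rw [Finset.eq_empty_iff_forall_notMem]
          intro m hm
          have hmIcc : m ∈ Finset.Icc 1 N :=
            Finset.Icc_subset_Icc_right hn (hS hm)
          have hsm : 0 < s m := hs m hmIcc
          have h1 := hfeas m hm
          have h2 : s m ≤ ∑ m' ∈ S.filter (fun m' => m' ≤ m), s m' :=
            Finset.single_le_sum (fun i _ => Nat.zero_le (s i))
              (Finset.mem_filter.mpr ⟨hm, le_rfl⟩)
          omega
        simp [hSe, knapsackDP]
    | succ t iht =>
      by_cases hτ : τ (n + 1) < t + 1
      · -- Case A : t exceeds the deadline of n+1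
        have hval : knapsackDP r s τ (n + 1) (t + 1) = knapsackDP r s τ (n + 1) t := by
          rw [knapsackDP, if_pos hτ]
        have hset : feasSet r s τ (n + 1) (t + 1) = feasSet r s τ (n + 1) t := by
          have hτm : ∀ m, m ∈ Finset.Icc 1 (n + 1) → τ m ≤ t := by
            intro m hm
            rw [Finset.mem_Icc] at hm
            exact (hsorted m (n + 1) hm.1 hm.2 hn).trans (Nat.lt_succ_iff.mp hτ)
          ext x
          constructor <;> rintro ⟨S, h1, h2, rfl⟩ <;> refine ⟨S, h1, fun m hm => ?_, rfl⟩
          · have hm' : τ m ≤ t := hτm m (h1 hm)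
            have := h2 m hm
            rw [min_eq_left (hm'.trans (Nat.le_succ t))] at this
            rwa [min_eq_left hm']
          · have hm' : τ m ≤ t := hτm m (h1 hm)
            have := h2 m hm
            rw [min_eq_left hm'] at this
            rwa [min_eq_left (hm'.trans (Nat.le_succ t))]
        rw [hval, hset]
        exact iht
      · -- Case B : t + 1 ≤ τ (n+1)
        have hτ' : t + 1 ≤ τ (n + 1) := Nat.le_of_not_lt hτ
        -- facts about sets containing n+1
        have hsn1pos : 0 < s (n + 1) := hs (n + 1) (Finset.mem_Icc.mpr ⟨Nat.succ_le_succ (Nat.zero_le n), hn⟩)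
        by_cases hsle : s (n + 1) ≤ t + 1
        · -- include/exclude choice
          set t' := t + 1 - s (n + 1) with ht'
          have hval : knapsackDP r s τ (n + 1) (t + 1) =
              max (knapsackDP r s τ n (t + 1))
                (r (n + 1) + knapsackDP r s τ n t') := by
            rw [knapsackDP, if_neg hτ, if_pos hsle]
          obtain ⟨hA, hAub⟩ := ih hn' (t + 1)
          obtain ⟨hB, hBub⟩ := ih hn' t'
          rw [hval]
          constructor
          · -- membership
            rcases max_choice (knapsackDP r s τ n (t + 1))
                (r (n + 1) + knapsackDP r s τ n t') with hmx | hmx <;> rw [hmx]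
            · obtain ⟨S, h1, h2, h3⟩ := hA
              exact ⟨S, h1.trans (Finset.Icc_subset_Icc_right (Nat.le_succ n)), h2, h3⟩
            · obtain ⟨S, h1, h2, h3⟩ := hB
              have hnot : n + 1 ∉ S := by
                intro hmem
                have := (Finset.mem_Icc.mp (h1 hmem)).2
                omega
              refine ⟨insert (n + 1) S, ?_, ?_, ?_⟩
              · intro m hm
                rcases Finset.mem_insert.mp hm with rfl | hm'
                · exact Finset.mem_Icc.mpr ⟨Nat.succ_le_succ (Nat.zero_le n), le_rfl⟩
                · exact Finset.Icc_subset_Icc_right (Nat.le_succ n) (h1 hm')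
              · intro m hm
                rcases Finset.mem_insert.mp hm with rfl | hm'
                · -- m = n+1 : whole sum
                  have hfull : (insert (n + 1) S).filter (fun m' => m' ≤ n + 1) = insert (n + 1) S := by
                    apply Finset.filter_true_of_mem
                    intro x hx
                    rcases Finset.mem_insert.mp hx with rfl | hx'
                    · exact le_rfl
                    · have := (Finset.mem_Icc.mp (h1 hx')).2
                      omega
                  rw [hfull, Finset.sum_insert hnot]
                  have htot : ∑ m' ∈ S, s m' ≤ t' := feas_total_le s τ t' S h2
                  have : s (n + 1) + ∑ m' ∈ S, s m' ≤ t + 1 := by omega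
                  rw [min_eq_right hτ']
                  exact this
                · -- m ∈ S, m ≤ n
                  have hmle : m ≤ n := (Finset.mem_Icc.mp (h1 hm')).2
                  have hflt : (insert (n + 1) S).filter (fun m' => m' ≤ m)
                      = S.filter (fun m' => m' ≤ m) := by
                    rw [Finset.filter_insert, if_neg (by omega)]
                  rw [hflt]
                  have := h2 m hm'
                  have ht'le : t' ≤ t + 1 := Nat.sub_le _ _
                  calc ∑ m' ∈ S.filter (fun m' => m' ≤ m), s m' ≤ min (τ m) t' := h2 m hm'
                    _ ≤ min (τ m) (t + 1) := min_le_min le_rfl ht'le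
              · rw [Finset.sum_insert hnot, h3]
          · -- upper bound
            rintro x ⟨S, hsub, hfeas, rfl⟩
            by_cases hmem : n + 1 ∈ S
            · -- erase n+1
              set S' := S.erase (n + 1) with hS'
              have hsub' : S' ⊆ Finset.Icc 1 n := by
                intro m hm
                have hm1 := Finset.mem_of_mem_erase hm
                have hne := Finset.ne_of_mem_erase hm
                have := Finset.mem_Icc.mp (hsub hm1)
                exact Finset.mem_Icc.mpr ⟨this.1, by omega⟩
              -- whole-sum bound on S
              have hfullS : S.filter (fun m' => m' ≤ n + 1) = S := by
                apply Finset.filter_true_of_mem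
                intro x hx
                exact (Finset.mem_Icc.mp (hsub hx)).2
              have htotS : ∑ m' ∈ S, s m' ≤ t + 1 := by
                have := hfeas (n + 1) hmem
                rw [hfullS, min_eq_right hτ'] at this
                exact this
              have hsplit : s (n + 1) + ∑ m' ∈ S', s m' = ∑ m' ∈ S, s m' :=
                Finset.add_sum_erase S s hmem
              have htotS' : ∑ m' ∈ S', s m' ≤ t' := by omega
              have hfeas' : ∀ m ∈ S', ∑ m' ∈ S'.filter (fun m' => m' ≤ m), s m' ≤ min (τ m) t' := by
                intro m hm
                have hmle : m ≤ n := (Finset.mem_Icc.mp (hsub' hm)).2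
                have hflt : S'.filter (fun m' => m' ≤ m) = S.filter (fun m' => m' ≤ m) := by
                  rw [hS', Finset.filter_erase, Finset.erase_eq_of_notMem]
                  intro hc
                  have := (Finset.mem_filter.mp hc).2
                  omega
                refine le_min ?_ ?_
                · have := hfeas m (Finset.mem_of_mem_erase hm)
                  rw [← hflt] at this
                  exact this.trans (min_le_left _ _)
                · calc ∑ m' ∈ S'.filter (fun m' => m' ≤ m), s m'
                      ≤ ∑ m' ∈ S', s m' :=
                        Finset.sum_le_sum_of_subset (Finset.filter_subset _ _)
                    _ ≤ t' := htotS'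
              have hle : ∑ m' ∈ S', r m' ≤ knapsackDP r s τ n t' :=
                hBub ⟨S', hsub', hfeas', rfl⟩
              have hsplitr : ∑ m' ∈ S, r m' = r (n + 1) + ∑ m' ∈ S', r m' :=
                (Finset.add_sum_erase S r hmem).symm
              rw [hsplitr]
              exact le_max_of_le_right (by linarith)
            · have hsub' : S ⊆ Finset.Icc 1 n := by
                intro m hm
                have := Finset.mem_Icc.mp (hsub hm)
                have : 1 ≤ m ∧ m ≤ n := ⟨this.1, by rcases Nat.lt_or_ge m (n + 1) with h | h
                                                    · omega
                                                    · exact absurd (by omega : m = n + 1)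
                                                        (fun he => hmem (he ▸ hm))⟩
                exact Finset.mem_Icc.mpr this
              exact le_max_of_le_left (hAub ⟨S, hsub', hfeas, rfl⟩)
        · -- s (n+1) > t + 1 : n+1 can never fit
          have hval : knapsackDP r s τ (n + 1) (t + 1) = knapsackDP r s τ n (t + 1) := by
            rw [knapsackDP, if_neg hτ, if_neg hsle]
          obtain ⟨hA, hAub⟩ := ih hn' (t + 1)
          rw [hval]
          constructor
          · obtain ⟨S, h1, h2, h3⟩ := hA
            exact ⟨S, h1.trans (Finset.Icc_subset_Icc_right (Nat.le_succ n)), h2, h3⟩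
          · rintro x ⟨S, hsub, hfeas, rfl⟩
            have hmem : n + 1 ∉ S := by
              intro hmem
              have h2 : s (n + 1) ≤ ∑ m' ∈ S.filter (fun m' => m' ≤ n + 1), s m' :=
                Finset.single_le_sum (fun i _ => Nat.zero_le (s i))
                  (Finset.mem_filter.mpr ⟨hmem, le_rfl⟩)
              have h1 := hfeas (n + 1) hmem
              have := min_le_right (τ (n + 1)) (t + 1)
              omega
            have hsub' : S ⊆ Finset.Icc 1 n := by
              intro m hm
              have hIc := Finset.mem_Icc.mp (hsub hm)
              refine Finset.mem_Icc.mpr ⟨hIc.1, ?_⟩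
              rcases Nat.lt_or_ge m (n + 1) with h | h
              · omega
              · exact absurd (by omega : m = n + 1) (fun he => hmem (he ▸ hm))
            exact hAub ⟨S, hsub', hfeas, rfl⟩

/-- Correctness of the Modified Knapsack dynamic program: given deadlines sorted as
`τ 1 ≤ τ 2 ≤ ⋯ ≤ τ N`, the value `M[N,T]` is the maximum of `∑_{n ∈ S} r n` over all
subsets `S ⊆ {1,…,N}` that are feasible within time `T`, i.e. such that executing the
jobs of `S` consecutively in increasing index order every job `m ∈ S` completes by
`min (τ m) T`. -/
theorem knapsackDP_correct (N T : ℕ) (hN : 0 < N) (hT : 0 < T)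
    (r : ℕ → ℝ) (s τ : ℕ → ℕ)
    (hr : ∀ n ∈ Finset.Icc 1 N, 0 ≤ r n)
    (hs : ∀ n ∈ Finset.Icc 1 N, 0 < s n)
    (hτpos : ∀ n ∈ Finset.Icc 1 N, 0 < τ n)
    (hτle : ∀ n ∈ Finset.Icc 1 N, τ n ≤ T)
    (hsorted : ∀ m n, 1 ≤ m → m ≤ n → n ≤ N → τ m ≤ τ n) :
    IsGreatest
      {x : ℝ | ∃ S : Finset ℕ, S ⊆ Finset.Icc 1 N ∧
        (∀ m ∈ S, ∑ m' ∈ S.filter (fun m' => m' ≤ m), s m' ≤ min (τ m) T) ∧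
        x = ∑ n ∈ S, r n}
      (knapsackDP r s τ N T) :=
  knapsackDP_isGreatest N r s τ hs hsorted N le_rfl T
end

section
/- Define V : List (ℝ × ℝ) → ℕ → ℝ by V([], n) = 0, V(l, 0) = 0, and V((r,p)::l, n+1) = p·(r + V(l, n)) + (1−p)·V((r,p)::l, n). Let l₁, l₂ be lists of pairs (r,p) with all r ≥ 0 and all p ∈ [0,1], and let a = (r_a, p_a), b = (r_b, p_b) with r_a, r_b ≥ 0, p_a, p_b ∈ [0,1]. If r_a·p_a ≥ r_b·p_b, then V(l₁ ++ [a, b] ++ l₂, n) ≥ V(l₁ ++ [b, a] ++ l₂, n) for every n ∈ ℕ. -/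
/-- `expectedDebt l n` is the expected total collected debt when the AP has `n` time
slots and serves clients in the priority order `l`, each client being a pair `(r, p)` of
its delivery debt and channel reliability: each slot the AP transmits to the first
unserved client, succeeding with probability `p`, collecting `r` upon success. -/
noncomputable def expectedDebt : List (ℝ × ℝ) → ℕ → ℝ
  | [], _ => 0
  | _ :: _, 0 => 0
  | (r, p) :: l, n + 1 =>
      p * (r + expectedDebt l n) + (1 - p) * expectedDebt ((r, p) :: l) n
  termination_by l n => (l.length, n)

lemma expectedDebt_cons (r p : ℝ) (l : List (ℝ × ℝ)) (n : ℕ) :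
    expectedDebt ((r, p) :: l) (n + 1) =
      p * (r + expectedDebt l n) + (1 - p) * expectedDebt ((r, p) :: l) n := by
  rw [expectedDebt]

lemma expectedDebt_zero (l : List (ℝ × ℝ)) : expectedDebt l 0 = 0 := by
  cases l with
  | nil => rw [expectedDebt]
  | cons a l => obtain ⟨r, p⟩ := a; rw [expectedDebt]

/-- auxiliary linear recurrence identity. -/
lemma keyE (ra pa rb pb : ℝ) (l₂ : List (ℝ × ℝ)) (n : ℕ) :
    pa * expectedDebt ((rb, pb) :: l₂) n - pb * expectedDebt ((ra, pa) :: l₂) n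
      + (pb - pa) * expectedDebt ((rb, pb) :: (ra, pa) :: l₂) n
    = -pb * (ra * pa - rb * pb) * ∑ k ∈ Finset.range n, (1 - pb) ^ k := by
  induction n with
  | zero => simp [expectedDebt_zero]
  | succ n ih =>
      rw [expectedDebt_cons, expectedDebt_cons, expectedDebt_cons, geom_sum_succ']
      have hgeom : (∑ i ∈ Finset.range n, (1 - pb) ^ i) * ((1 - pb) - 1)
          = (1 - pb) ^ n - 1 := geom_sum_mul (1 - pb) n
      linear_combination (1 - pb) * ih - pb * (ra * pa - rb * pb) * hgeom

lemma sum_aux (x y : ℝ) (n : ℕ) :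
    ∑ k ∈ Finset.range (n + 1), x ^ k * y ^ (n - k)
      = y ^ n + x * ∑ k ∈ Finset.range n, x ^ k * y ^ (n - 1 - k) := by
  rw [Finset.sum_range_succ']
  simp only [pow_zero, one_mul, Nat.sub_zero, Finset.mul_sum]
  rw [add_comm]
  congr 1
  apply Finset.sum_congr rfl
  intro k hk
  have hk' : k < n := Finset.mem_range.mp hk
  have : n - (k + 1) = n - 1 - k := by omega
  rw [this]; ring

/-- Closed form for the swap difference. -/
lemma keyD (ra pa rb pb : ℝ) (l₂ : List (ℝ × ℝ)) (n : ℕ) :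
    expectedDebt ((ra, pa) :: (rb, pb) :: l₂) n
      - expectedDebt ((rb, pb) :: (ra, pa) :: l₂) n
    = (ra * pa - rb * pb) *
        ∑ k ∈ Finset.range n, (1 - pa) ^ k * (1 - pb) ^ (n - 1 - k) := by
  induction n with
  | zero => simp [expectedDebt_zero]
  | succ n ih =>
      rw [expectedDebt_cons, expectedDebt_cons]
      have hE := keyE ra pa rb pb l₂ n
      have hgeom : (∑ i ∈ Finset.range n, (1 - pb) ^ i) * ((1 - pb) - 1)
          = (1 - pb) ^ n - 1 := geom_sum_mul (1 - pb) n
      have hsum : ∑ k ∈ Finset.range (n + 1), (1 - pa) ^ k * (1 - pb) ^ (n - k)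
          = (1 - pb) ^ n + (1 - pa) *
            ∑ k ∈ Finset.range n, (1 - pa) ^ k * (1 - pb) ^ (n - 1 - k) :=
        sum_aux (1 - pa) (1 - pb) n
      have : n + 1 - 1 = n := rfl
      rw [this, hsum]
      linear_combination hE + (1 - pa) * ih + (ra * pa - rb * pb) * hgeom

/-- Adjacent-swap inequality for the joint debt-channel policy: placing first the client
with the larger debt-reliability product `r * p` does not decrease the expected payoff. -/
theorem expectedDebt_swap (l₁ l₂ : List (ℝ × ℝ))
    (h₁ : ∀ x ∈ l₁, 0 ≤ x.1 ∧ x.2 ∈ Set.Icc (0 : ℝ) 1)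
    (h₂ : ∀ x ∈ l₂, 0 ≤ x.1 ∧ x.2 ∈ Set.Icc (0 : ℝ) 1)
    (ra pa rb pb : ℝ) (hra : 0 ≤ ra) (hrb : 0 ≤ rb)
    (hpa : pa ∈ Set.Icc (0 : ℝ) 1) (hpb : pb ∈ Set.Icc (0 : ℝ) 1)
    (h : ra * pa ≥ rb * pb) (n : ℕ) :
    expectedDebt (l₁ ++ [(ra, pa), (rb, pb)] ++ l₂) n ≥
      expectedDebt (l₁ ++ [(rb, pb), (ra, pa)] ++ l₂) n := by
  induction l₁ generalizing n with
  | nil =>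
      simp only [List.nil_append, List.cons_append]
      rw [ge_iff_le, ← sub_nonneg, keyD]
      apply mul_nonneg (by linarith)
      apply Finset.sum_nonneg
      intro k _
      exact mul_nonneg (pow_nonneg (by linarith [hpa.2]) _)
        (pow_nonneg (by linarith [hpb.2]) _)
  | cons c l₁' ih =>
      obtain ⟨r, p⟩ := c
      have hc := h₁ (r, p) List.mem_cons_self
      have h₁' : ∀ x ∈ l₁', 0 ≤ x.1 ∧ x.2 ∈ Set.Icc (0 : ℝ) 1 :=
        fun x hx => h₁ x (List.mem_cons_of_mem _ hx)
      induction n with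
      | zero => simp [expectedDebt_zero]
      | succ n ihn =>
          simp only [List.cons_append]
          rw [expectedDebt_cons, expectedDebt_cons]
          have ht := ih h₁' n
          simp only [List.cons_append] at ihn
          have hp0 : (0:ℝ) ≤ p := hc.2.1
          have hp1 : (0:ℝ) ≤ 1 - p := by linarith [hc.2.2]
          have := mul_le_mul_of_nonneg_left (ge_iff_le.mp ht) hp0
          have := mul_le_mul_of_nonneg_left (ge_iff_le.mp ihn) hp1
          simp only [ge_iff_le]
          nlinarith
end
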